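/- Let α > 1 be real, p ≥ 1 an integer, and set λ_i = i^{-α} for i = 1,…,p. Let k = (3 + 2^{-α})/(4 + 2^{-(α-2)}), suppose the real n satisfies 0 < n < p·k, and suppose τ > 0 satisfies Σ_{i=1}^p λ_i/(λ_i + τ) = n. Then, with c = (α sin(π/α)/π)^{α}, it holds that c · n^{α} ≤ τ^{-1} ≤ c · (n + 1 + (p + 1)/(α − 1))^{α}. -/

import Mathlib

open Real Set MeasureTheory

-- Step A3: the Ioo-integral equals π / sin(π b)
lemma betaReal (b : ℝ) (hb0 : 0 < b) (hb1 : b < 1) :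
    ∫ u in Ioo (0:ℝ) 1, u ^ (b-1) * (1-u) ^ (-b) = π / Real.sin (π * b) := by
  have h1 : Complex.betaIntegral b (1-b) = ((∫ u in (0:ℝ)..1, u ^ (b-1) * (1-u) ^ (-b) : ℝ) : ℂ) := by
    rw [Complex.betaIntegral, ← intervalIntegral.integral_ofReal]
    apply intervalIntegral.integral_congr
    intro x hx
    rw [uIcc_of_le (by norm_num)] at hx
    dsimp only
    rw [show ((b:ℂ) - 1) = ((b-1 : ℝ):ℂ) by push_cast; ring,
      show (1 - (b:ℂ) - 1) = ((-b : ℝ):ℂ) by push_cast; ring,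
      show (1 - (x:ℂ)) = ((1-x : ℝ):ℂ) by push_cast; ring,
      ← Complex.ofReal_cpow hx.1, ← Complex.ofReal_cpow (by linarith [hx.2]),
      ← Complex.ofReal_mul]
  have h2 : Complex.Gamma b * Complex.Gamma (1-b) = Complex.betaIntegral b (1-b) := by
    have := Complex.Gamma_mul_Gamma_eq_betaIntegral (s := (b:ℂ)) (t := ((1-b : ℝ):ℂ))
      (by simpa using hb0) (by simp [Complex.ofReal_re]; linarith)
    push_cast at this ⊢
    simpa [Complex.Gamma_one] using this
  have h3 : Complex.Gamma b * Complex.Gamma (1-b) = (π:ℂ) / Complex.sin (π * b) := by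
    have := Complex.Gamma_mul_Gamma_one_sub (b:ℂ)
    push_cast at this ⊢
    exact this
  have h4 : ((∫ u in (0:ℝ)..1, u ^ (b-1) * (1-u) ^ (-b) : ℝ) : ℂ) = ((π / Real.sin (π * b) : ℝ) : ℂ) := by
    rw [← h1, ← h2, h3]
    push_cast [Complex.ofReal_sin]
    norm_num
  have h5 := Complex.ofReal_inj.mp h4
  rw [← h5, intervalIntegral.integral_of_le (by norm_num : (0:ℝ) ≤ 1),
    MeasureTheory.integral_Ioc_eq_integral_Ioo]

lemma mellinOneAdd (b : ℝ) (hb0 : 0 < b) (hb1 : b < 1) :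
    ∫ x in Ioi (0:ℝ), x ^ (b-1) / (1 + x) = π / Real.sin (π * b) := by
  have himg : (fun u : ℝ => u / (1 - u)) '' Ioo 0 1 = Ioi 0 := by
    ext x
    constructor
    · rintro ⟨u, hu, rfl⟩
      exact div_pos hu.1 (by linarith [hu.2])
    · intro hx
      refine ⟨x / (1 + x), ⟨div_pos hx (by linarith [mem_Ioi.mp hx]), ?_⟩, ?_⟩
      · rw [div_lt_one (by linarith [mem_Ioi.mp hx])]; linarith [mem_Ioi.mp hx]
      · have h1x : (0:ℝ) < 1 + x := by linarith [mem_Ioi.mp hx]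
        field_simp
        ring
  have hderiv : ∀ u ∈ Ioo (0:ℝ) 1, HasDerivWithinAt (fun u : ℝ => u / (1 - u))
      (((1 - u) ^ 2)⁻¹) (Ioo 0 1) u := by
    intro u hu
    have h1u : (1:ℝ) - u ≠ 0 := by intro h; have := hu.2; simp [sub_eq_zero] at h; linarith
    have := (hasDerivAt_id u).div ((hasDerivAt_const u 1).sub (hasDerivAt_id u)) h1u
    refine this.hasDerivWithinAt.congr_deriv ?_
    simp only [id, Pi.sub_apply]
    field_simp
    ring
  have hinj : InjOn (fun u : ℝ => u / (1 - u)) (Ioo 0 1) := by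
    apply StrictMonoOn.injOn
    intro u hu v hv huv
    have h1u : (0:ℝ) < 1 - u := by linarith [hu.2]
    have h1v : (0:ℝ) < 1 - v := by linarith [hv.2]
    rw [div_lt_div_iff₀ h1u h1v]
    nlinarith [hu.1]
  have key := MeasureTheory.integral_image_eq_integral_abs_deriv_smul measurableSet_Ioo
    hderiv hinj (fun x => x ^ (b-1) / (1 + x))
  rw [himg] at key
  rw [key, ← betaReal b hb0 hb1]
  apply setIntegral_congr_fun measurableSet_Ioo
  intro u hu
  have hu0 : (0:ℝ) < u := hu.1
  have hv : (0:ℝ) < 1 - u := by linarith [hu.2]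
  have e0 : 1 + u / (1 - u) = (1 - u)⁻¹ := by field_simp; ring
  have e1 : (1-u) ^ (b-1) * (1-u) ^ (-b) = ((1-u):ℝ)⁻¹ := by
    rw [← Real.rpow_add hv, show b - 1 + -b = -1 by ring, Real.rpow_neg_one]
  dsimp only
  rw [smul_eq_mul, e0, Real.div_rpow hu0.le hv.le, abs_of_nonneg (by positivity)]
  have hY1 : ((1-u):ℝ) ^ (b-1) ≠ 0 := by positivity
  have e1' : (1-u) ^ (b-1) * (1-u) ^ (-b) * (1-u) = 1 := by
    rw [e1]; field_simp
  field_simp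
  linear_combination (-1 : ℝ) * e1'

lemma intOneAddRpow (α : ℝ) (hα : 1 < α) :
    ∫ x in Ioi (0:ℝ), (1 + x ^ α)⁻¹ = π / (α * Real.sin (π / α)) := by
  have hα0 : (0:ℝ) < α := by linarith
  set b : ℝ := 1/α with hb
  have hb0 : 0 < b := by positivity
  have hb1 : b < 1 := by rw [hb, div_lt_one hα0]; linarith
  have key := integral_comp_rpow_Ioi_of_pos
    (g := fun y : ℝ => (1/α) * (y ^ (b-1) / (1 + y))) hα0
  have congr1 : ∫ x in Ioi (0:ℝ), (α * x ^ (α-1)) •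
      ((1/α) * ((x ^ α) ^ (b-1) / (1 + x ^ α))) = ∫ x in Ioi (0:ℝ), (1 + x ^ α)⁻¹ := by
    apply setIntegral_congr_fun measurableSet_Ioi
    intro x hx
    have hx0 : (0:ℝ) < x := hx
    have h1 : (x ^ α) ^ (b-1) = x ^ (1-α) := by
      rw [← Real.rpow_mul hx0.le]
      congr 1
      rw [hb]; field_simp
    have hxx : x ^ (α-1) * x ^ (1-α) = 1 := by
      rw [← Real.rpow_add hx0]
      norm_num
    have hne : (1 + x ^ α) ≠ 0 := by positivity
    dsimp only
    rw [smul_eq_mul, h1, show α * x ^ (α-1) * ((1/α) * (x ^ (1-α) / (1 + x ^ α)))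
      = (x ^ (α-1) * x ^ (1-α)) * (α * (1/α)) / (1 + x ^ α) by ring, hxx,
      mul_one_div_cancel hα0.ne', one_mul, one_div]
  rw [← congr1, key]
  rw [MeasureTheory.integral_const_mul, mellinOneAdd b hb0 hb1]
  rw [show π * b = π / α by rw [hb]; ring]
  field_simp

lemma intScaled (α : ℝ) (hα : 1 < α) (τ : ℝ) (hτ : 0 < τ) :
    ∫ x in Ioi (0:ℝ), (1 + τ * x ^ α)⁻¹ = τ ^ (-(1/α)) * (π / (α * Real.sin (π / α))) := by
  have hα0 : (0:ℝ) < α := by linarith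
  have hbpos : 0 < τ ^ (1/α) := Real.rpow_pos_of_pos hτ _
  have key := MeasureTheory.integral_comp_mul_left_Ioi
    (g := fun y : ℝ => (1 + y ^ α)⁻¹) 0 hbpos
  rw [mul_zero] at key
  have congr1 : ∫ x in Ioi (0:ℝ), (1 + (τ ^ (1/α) * x) ^ α)⁻¹
      = ∫ x in Ioi (0:ℝ), (1 + τ * x ^ α)⁻¹ := by
    apply setIntegral_congr_fun measurableSet_Ioi
    intro x hx
    have hx0 : (0:ℝ) < x := hx
    dsimp only
    rw [Real.mul_rpow hbpos.le hx0.le, ← Real.rpow_mul hτ.le,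
      one_div_mul_cancel hα0.ne', Real.rpow_one]
  rw [← congr1, key, intOneAddRpow α hα, smul_eq_mul, ← Real.rpow_neg_one,
    ← Real.rpow_mul hτ.le]
  norm_num

lemma measF (α τ : ℝ) (hα : 0 ≤ α) : Measurable (fun x : ℝ => (1 + τ * x ^ α)⁻¹) :=
  ((measurable_const.add (((Real.continuous_rpow_const hα).measurable).const_mul τ)).inv)

lemma integrableF (α : ℝ) (hα : 1 < α) (τ : ℝ) (hτ : 0 < τ) :
    IntegrableOn (fun x : ℝ => (1 + τ * x ^ α)⁻¹) (Ioi 0) := by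
  have hmeas := (measF α τ (by linarith)).aestronglyMeasurable (μ := volume)
  have h1 : IntegrableOn (fun x : ℝ => (1 + τ * x ^ α)⁻¹) (Ioc 0 1) := by
    refine MeasureTheory.Measure.integrableOn_of_bounded (M := 1)
      measure_Ioc_lt_top.ne hmeas ?_
    filter_upwards [MeasureTheory.ae_restrict_mem measurableSet_Ioc] with x hx
    have hx0 : (0:ℝ) < x := hx.1
    have hxp : (0:ℝ) < x ^ α := Real.rpow_pos_of_pos hx0 α
    have : (0:ℝ) < 1 + τ * x ^ α := by positivity
    rw [Real.norm_eq_abs, abs_of_pos (by positivity), inv_le_one_iff₀]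
    right
    nlinarith
  have h2 : IntegrableOn (fun x : ℝ => (1 + τ * x ^ α)⁻¹) (Ioi 1) := by
    apply MeasureTheory.Integrable.mono' (g := fun x : ℝ => τ⁻¹ * x ^ (-α))
    · exact (integrableOn_Ioi_rpow_of_lt (by linarith) one_pos).const_mul _
    · exact hmeas.restrict
    · filter_upwards [MeasureTheory.ae_restrict_mem measurableSet_Ioi] with x hx
      have hx0 : (0:ℝ) < x := lt_trans one_pos hx
      have hxp : (0:ℝ) < x ^ α := Real.rpow_pos_of_pos hx0 α
      have hpos : (0:ℝ) < 1 + τ * x ^ α := by positivity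
      rw [Real.norm_eq_abs, abs_of_pos (by positivity), Real.rpow_neg hx0.le,
        ← mul_inv]
      apply inv_anti₀ (by positivity)
      nlinarith
  have := h1.union h2
  rwa [Set.Ioc_union_Ioi_eq_Ioi (by norm_num : (0:ℝ) ≤ 1)] at this

lemma antitoneF (α : ℝ) (hα : 1 < α) (τ : ℝ) (hτ : 0 < τ) (s : Set ℝ) (hs : s ⊆ Ici 0) :
    AntitoneOn (fun x : ℝ => (1 + τ * x ^ α)⁻¹) s := by
  intro x hx y hy hxy
  have hx0 : (0:ℝ) ≤ x := hs hx
  have h1 : x ^ α ≤ y ^ α := Real.rpow_le_rpow hx0 hxy (by linarith)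
  have h2 : (0:ℝ) < 1 + τ * x ^ α := by positivity
  apply inv_anti₀ h2
  nlinarith

lemma termEq (α : ℝ) (τ : ℝ) (hτ : 0 < τ) (i : ℕ) (hi : 1 ≤ i) :
    (i : ℝ) ^ (-α) / ((i : ℝ) ^ (-α) + τ) = (1 + τ * (i : ℝ) ^ α)⁻¹ := by
  have hi0 : (0:ℝ) < (i:ℝ) := by exact_mod_cast hi
  have hb : (0:ℝ) < (i:ℝ) ^ α := Real.rpow_pos_of_pos hi0 α
  rw [Real.rpow_neg hi0.le]
  have h1 : (0:ℝ) < (i:ℝ) ^ α * ((((i:ℝ) ^ α)⁻¹ + τ)) := by positivity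
  field_simp

/-- Non-asymptotic bounds on the effective ridge parameter `τ` for the
finite-dimensional power-law covariance `λ_i = i^{-α}`, `i = 1,…,p`, when
`∑_{i=1}^p λ_i/(λ_i + τ) = n` and `0 < n < p k` with `k = (3 + 2^{-α})/(4 + 2^{-(α-2)})`:
`c n^α ≤ τ⁻¹ ≤ c (n + 1 + (p+1)/(α-1))^α` with `c = (α sin(π/α)/π)^α`. -/
theorem effective_ridge_nonasymptotic_bounds
    (α : ℝ) (hα : 1 < α) (p : ℕ) (hp : 1 ≤ p)
    (k : ℝ) (hk : k = (3 + (2 : ℝ) ^ (-α)) / (4 + (2 : ℝ) ^ (-(α - 2))))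
    (n : ℝ) (hn0 : 0 < n) (hnp : n < p * k)
    (τ : ℝ) (hτ : 0 < τ)
    (hsum : ∑ i ∈ Finset.Icc 1 p, (i : ℝ) ^ (-α) / ((i : ℝ) ^ (-α) + τ) = n)
    (c : ℝ) (hc : c = (α * Real.sin (Real.pi / α) / Real.pi) ^ α) :
    c * n ^ α ≤ τ⁻¹ ∧ τ⁻¹ ≤ c * (n + 1 + ((p : ℝ) + 1) / (α - 1)) ^ α := by
  have hα0 : (0:ℝ) < α := by linarith
  set f : ℝ → ℝ := fun x => (1 + τ * x ^ α)⁻¹ with hf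
  set I : ℝ := π / (α * Real.sin (π / α)) with hI
  have hsin : 0 < Real.sin (π / α) := by
    apply Real.sin_pos_of_pos_of_lt_pi
    · positivity
    · exact div_lt_self Real.pi_pos hα
  have hIpos : 0 < I := by
    rw [hI]
    apply div_pos Real.pi_pos (by positivity)
  have hcI : c = (I⁻¹) ^ α := by
    rw [hc, hI]
    congr 1
    field_simp
  -- rewrite the sum
  have hsum' : ∑ i ∈ Finset.Icc 1 p, f (i : ℝ) = n := by
    rw [← hsum]
    apply Finset.sum_congr rfl
    intro i hi
    rw [termEq α τ hτ i (Finset.mem_Icc.mp hi).1]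
  have hfnonneg : ∀ x : ℝ, 0 < x → 0 ≤ f x := by
    intro x hx
    have := Real.rpow_pos_of_pos hx α
    rw [hf]
    positivity
  -- Step S2 : (p+1)^(-α) ≤ τ
  have hS2 : ((p:ℝ) + 1) ^ (-α) ≤ τ := by
    by_contra hcon
    push_neg at hcon
    set t : ℝ := (2:ℝ) ^ (-α) with ht
    have ht0 : 0 < t := by positivity
    have ht1 : t < 1 := by
      rw [ht]
      apply Real.rpow_lt_one_of_one_lt_of_neg one_lt_two (by linarith)
    set q : ℕ := (p + 1) / 2 with hq
    have hq1 : 1 ≤ q := Nat.one_le_div_iff (by norm_num) |>.mpr (by omega)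
    have hqp : q ≤ p := by omega
    have h2q : p ≤ 2 * q := by omega
    have h2q' : 2 * q ≤ p + 1 := by omega
    have hp1 : (0:ℝ) < (p:ℝ) + 1 := by positivity
    -- bound each term
    have hbound1 : ∀ i ∈ Finset.Ioc 0 q, (1 + t)⁻¹ ≤ f (i:ℝ) := by
      intro i hi
      obtain ⟨hi0, hiq⟩ := Finset.mem_Ioc.mp hi
      have hi0' : (0:ℝ) < (i:ℝ) := by exact_mod_cast hi0
      have hile : (i:ℝ) ≤ ((p:ℝ) + 1) / 2 := by
        rw [le_div_iff₀ (by norm_num)]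
        have : (2:ℝ) * q ≤ (p:ℝ) + 1 := by exact_mod_cast h2q'
        have : (i:ℝ) * 2 ≤ (2:ℝ) * q := by
          have : (i:ℝ) ≤ (q:ℝ) := by exact_mod_cast hiq
          linarith
        linarith
      have key : τ * (i:ℝ) ^ α ≤ t := by
        have h1 : (i:ℝ) ^ α ≤ (((p:ℝ) + 1) / 2) ^ α :=
          Real.rpow_le_rpow hi0'.le hile hα0.le
        have h2 : τ * (i:ℝ) ^ α ≤ ((p:ℝ)+1) ^ (-α) * ((((p:ℝ) + 1) / 2) ^ α) := by
          apply mul_le_mul hcon.le h1 (by positivity) (by positivity)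
        calc τ * (i:ℝ) ^ α ≤ ((p:ℝ)+1) ^ (-α) * ((((p:ℝ) + 1) / 2) ^ α) := h2
          _ = t := by
            rw [Real.div_rpow hp1.le (by norm_num), Real.rpow_neg hp1.le, ht,
              Real.rpow_neg (by norm_num)]
            have h3 : (0:ℝ) < ((p:ℝ)+1) ^ α := Real.rpow_pos_of_pos hp1 α
            have h4 : (0:ℝ) < (2:ℝ) ^ α := Real.rpow_pos_of_pos (by norm_num) α
            field_simp
      rw [hf]
      apply inv_anti₀ (by positivity)
      linarith
    have hbound2 : ∀ i ∈ Finset.Ioc q p, (2:ℝ)⁻¹ ≤ f (i:ℝ) := by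
      intro i hi
      obtain ⟨hi0, hip⟩ := Finset.mem_Ioc.mp hi
      have hi0' : (0:ℝ) < (i:ℝ) := by
        have : 0 < i := by omega
        exact_mod_cast this
      have key : τ * (i:ℝ) ^ α ≤ 1 := by
        have hile : (i:ℝ) ≤ (p:ℝ) + 1 := by
          have : (i:ℝ) ≤ (p:ℝ) := by exact_mod_cast hip
          linarith
        have h1 : (i:ℝ) ^ α ≤ ((p:ℝ) + 1) ^ α := Real.rpow_le_rpow hi0'.le hile hα0.le
        have h2 : τ * (i:ℝ) ^ α ≤ ((p:ℝ)+1) ^ (-α) * (((p:ℝ) + 1) ^ α) :=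
          mul_le_mul hcon.le h1 (by positivity) (by positivity)
        have h3 : ((p:ℝ)+1) ^ (-α) * (((p:ℝ) + 1) ^ α) = 1 := by
          rw [← Real.rpow_add hp1]
          norm_num
        linarith
      rw [hf]
      apply inv_anti₀ (by positivity)
      linarith
    -- combine
    have hsplit : (∑ i ∈ Finset.Ioc 0 q, f (i:ℝ)) + ∑ i ∈ Finset.Ioc q p, f (i:ℝ)
        = ∑ i ∈ Finset.Icc 1 p, f (i:ℝ) := by
      rw [show Finset.Icc 1 p = Finset.Ioc 0 p from rfl]
      exact Finset.sum_Ioc_consecutive _ (Nat.zero_le q) hqp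
    have hlow1 : (q:ℝ) * (1 + t)⁻¹ ≤ ∑ i ∈ Finset.Ioc 0 q, f (i:ℝ) := by
      have := Finset.card_nsmul_le_sum (Finset.Ioc 0 q) (fun i => f (i:ℝ)) ((1+t)⁻¹) hbound1
      rwa [Nat.card_Ioc, Nat.sub_zero, nsmul_eq_mul] at this
    have hlow2 : ((p:ℝ) - (q:ℝ)) * (2:ℝ)⁻¹ ≤ ∑ i ∈ Finset.Ioc q p, f (i:ℝ) := by
      have := Finset.card_nsmul_le_sum (Finset.Ioc q p) (fun i => f (i:ℝ)) ((2:ℝ)⁻¹) hbound2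
      rwa [Nat.card_Ioc, nsmul_eq_mul, Nat.cast_sub hqp] at this
    have hkt : k = (3 + t) / (4 + 4 * t) := by
      rw [hk, ht]
      congr 2
      rw [show -(α - 2) = -α + 2 by ring, Real.rpow_add (by norm_num : (0:ℝ) < 2)]
      norm_num
      ring
    have hfinal : (p:ℝ) * k ≤ n := by
      rw [← hsum', ← hsplit]
      have hq2 : (p:ℝ) ≤ 2 * (q:ℝ) := by exact_mod_cast h2q
      have hqp' : (q:ℝ) ≤ (p:ℝ) := by exact_mod_cast hqp
      have habove : (p:ℝ) * k ≤ (q:ℝ) * (1 + t)⁻¹ + ((p:ℝ) - (q:ℝ)) * (2:ℝ)⁻¹ := by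
        rw [hkt, ← mul_div_assoc, div_le_iff₀ (by positivity)]
        have h1t : (0:ℝ) < 1 + t := by linarith
        have hinv : (1 + t)⁻¹ * (1 + t) = 1 := inv_mul_cancel₀ h1t.ne'
        nlinarith [mul_le_mul_of_nonneg_right hq2 (mul_pos ht0 (inv_pos.mpr h1t)).le]
      linarith
    linarith
  -- integrability and value of the full integral
  have hintF : IntegrableOn f (Ioi (0:ℝ)) := by rw [hf]; exact integrableF α hα τ hτ
  have hIoi : ∫ x in Ioi (0:ℝ), f x = τ ^ (-(1/α)) * I := by
    rw [hf, hI]; exact intScaled α hα τ hτ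
  -- the sum over Icc 1 p as a range sum
  have hrw : ∑ i ∈ Finset.Icc 1 p, f (i:ℝ) = ∑ i ∈ Finset.range p, f (0 + ((i+1:ℕ):ℝ)) := by
    rw [show Finset.Icc 1 p = Finset.Ico 1 (p+1) by rw [Finset.Ico_add_one_right_eq_Icc],
      Finset.sum_Ico_eq_sum_range]
    simp only [Nat.add_sub_cancel]
    apply Finset.sum_congr rfl
    intro i _
    congr 1
    push_cast
    ring
  -- Step S1 : n ≤ τ^{-1/α} I
  have hS1 : n ≤ τ ^ (-(1/α)) * I := by
    rw [← hIoi, ← hsum', hrw]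
    have hanti := antitoneF α hα τ hτ (Icc (0:ℝ) (0 + (p:ℕ))) (fun x hx => hx.1)
    refine le_trans hanti.sum_le_integral ?_
    rw [intervalIntegral.integral_of_le (by positivity)]
    apply setIntegral_mono_set hintF
    · filter_upwards [MeasureTheory.ae_restrict_mem measurableSet_Ioi] with x hx
        using hfnonneg x hx
    · exact HasSubset.Subset.eventuallyLE Ioc_subset_Ioi_self
  -- Step S3 : upper bound on the integral
  have hp1 : (0:ℝ) < (p:ℝ) + 1 := by positivity
  have hup : τ ^ (-(1/α)) * I ≤ n + 1 + ((p:ℝ)+1)/(α-1) := by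
    rw [← hIoi]
    have hsplit : ∫ x in Ioi (0:ℝ), f x
        = (∫ x in Ioc (0:ℝ) ((p:ℝ)+1), f x) + ∫ x in Ioi ((p:ℝ)+1), f x := by
      rw [← MeasureTheory.setIntegral_union (Set.Ioc_disjoint_Ioi le_rfl) measurableSet_Ioi
        (hintF.mono_set Set.Ioc_subset_Ioi_self)
        (hintF.mono_set (Set.Ioi_subset_Ioi hp1.le)),
        Set.Ioc_union_Ioi_eq_Ioi hp1.le]
    have hpart1 : ∫ x in Ioc (0:ℝ) ((p:ℝ)+1), f x ≤ 1 + n := by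
      have hanti := antitoneF α hα τ hτ (Icc (0:ℝ) (0 + ((p+1:ℕ)))) (fun x hx => hx.1)
      have h2 := hanti.integral_le_sum
      have hcast : (0:ℝ) + ((p+1:ℕ):ℝ) = (p:ℝ)+1 := by push_cast; ring
      rw [hcast, intervalIntegral.integral_of_le hp1.le] at h2
      have h2' : ∫ x in Ioc (0:ℝ) ((p:ℝ)+1), f x
          ≤ ∑ i ∈ Finset.range (p+1), f (0 + (i:ℕ)) := h2
      refine le_trans h2' ?_
      rw [Finset.sum_range_succ']
      have e0 : f (0 + ((0:ℕ):ℝ)) = 1 := by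
        rw [hf]
        norm_num [Real.zero_rpow hα0.ne']
      rw [e0]
      have heq : ∑ i ∈ Finset.range p, f (0 + ((i+1:ℕ):ℝ)) = n := by rw [← hrw, hsum']
      rw [heq]
      linarith
    have hpart2 : ∫ x in Ioi ((p:ℝ)+1), f x ≤ ((p:ℝ)+1)/(α-1) := by
      have hstep : ∫ x in Ioi ((p:ℝ)+1), f x ≤ ∫ x in Ioi ((p:ℝ)+1), τ⁻¹ * x ^ (-α) := by
        apply MeasureTheory.setIntegral_mono_on
          (hintF.mono_set (Set.Ioi_subset_Ioi hp1.le))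
          (((integrableOn_Ioi_rpow_of_lt (by linarith) hp1).const_mul _))
          measurableSet_Ioi
        intro x hx
        have hx0 : (0:ℝ) < x := lt_trans hp1 hx
        have hxp : (0:ℝ) < x ^ α := Real.rpow_pos_of_pos hx0 α
        rw [hf, Real.rpow_neg hx0.le, ← mul_inv]
        apply inv_anti₀ (by positivity)
        nlinarith
      have hval : ∫ x in Ioi ((p:ℝ)+1), τ⁻¹ * x ^ (-α)
          = τ⁻¹ * (-(((p:ℝ)+1) ^ (-α+1)) / (-α+1)) := by
        rw [MeasureTheory.integral_const_mul, integral_Ioi_rpow_of_lt (by linarith) hp1]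
      have hτinv : τ⁻¹ ≤ ((p:ℝ)+1) ^ α := by
        have := inv_anti₀ (Real.rpow_pos_of_pos hp1 (-α)) hS2
        rwa [Real.rpow_neg hp1.le, inv_inv] at this
      have hprod : ((p:ℝ)+1) ^ α * ((p:ℝ)+1) ^ (-α+1) = (p:ℝ)+1 := by
        rw [← Real.rpow_add hp1]
        norm_num
      have hrp : (0:ℝ) < ((p:ℝ)+1) ^ (-α+1) := Real.rpow_pos_of_pos hp1 _
      have hfin : τ⁻¹ * (-(((p:ℝ)+1) ^ (-α+1)) / (-α+1)) ≤ ((p:ℝ)+1)/(α-1) := by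
        rw [show -(((p:ℝ)+1) ^ (-α+1)) / (-α+1) = ((p:ℝ)+1) ^ (-α+1) / (α-1) by
          rw [show -α+1 = -(α-1) by ring, div_neg, neg_div, neg_neg]]
        rw [mul_div_assoc']
        have hnum : τ⁻¹ * (((p:ℝ)+1) ^ (-α+1)) ≤ (p:ℝ)+1 := by
          calc τ⁻¹ * (((p:ℝ)+1) ^ (-α+1))
              ≤ ((p:ℝ)+1) ^ α * (((p:ℝ)+1) ^ (-α+1)) :=
                mul_le_mul_of_nonneg_right hτinv hrp.le
            _ = (p:ℝ)+1 := hprod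
        exact (div_le_div_iff_of_pos_right (by linarith : (0:ℝ) < α - 1)).mpr hnum
      linarith [hstep.trans (le_of_eq hval) |>.trans hfin]
    rw [hsplit]
    linarith
  -- conclusion
  have hτα : (τ ^ (-(1/α))) ^ α = τ⁻¹ := by
    rw [← Real.rpow_mul hτ.le, show -(1/α)*α = -1 by field_simp, Real.rpow_neg_one]
  constructor
  · have h1 : n / I ≤ τ ^ (-(1/α)) := by
      rw [div_le_iff₀ hIpos]
      exact hS1
    have h2 : (n / I) ^ α ≤ (τ ^ (-(1/α))) ^ α :=
      Real.rpow_le_rpow (by positivity) h1 hα0.le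
    have h4 : (n / I) ^ α = c * n ^ α := by
      rw [div_eq_mul_inv, Real.mul_rpow hn0.le (by positivity), hcI]
      ring
    rw [← h4, ← hτα]
    exact h2
  · set M : ℝ := n + 1 + ((p:ℝ)+1)/(α-1) with hM
    have hM0 : 0 < M := by
      rw [hM]
      have : 0 < ((p:ℝ)+1)/(α-1) := div_pos hp1 (by linarith)
      linarith
    have h1 : τ ^ (-(1/α)) ≤ M / I := by
      rw [le_div_iff₀ hIpos]
      exact hup
    have h2 : (τ ^ (-(1/α))) ^ α ≤ (M / I) ^ α :=
      Real.rpow_le_rpow (by positivity) h1 hα0.le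
    have h4 : (M / I) ^ α = c * M ^ α := by
      rw [div_eq_mul_inv, Real.mul_rpow hM0.le (by positivity), hcI]
      ring
    rw [← hτα, ← h4]
    exact h2
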